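/- Let a₁₁, a₂₂ be real numbers and a₂₁ a nonzero real number such that (a₁₁ + a₂₂)³ − (a₁₁ + a₂₂) + 1 = 0. Then the real 2×2 matrix A with rows (a₁₁, (1 − a₁₁·a₂₂ − a₁₁² − a₂₂²)/a₂₁) and (a₂₁, a₂₂) satisfies A³ − A − I = 0. -/

import Mathlib

/-- If `a₂₁ ≠ 0` and the trace `a₁₁ + a₂₂` satisfies `t³ − t + 1 = 0`, then the 2×2 matrix
with rows `(a₁₁, (1 − a₁₁a₂₂ − a₁₁² − a₂₂²)/a₂₁)` and `(a₂₁, a₂₂)` is a plastic matrix,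
i.e. satisfies `A³ − A − I = 0`. -/
theorem plastic_matrix_of_entries (a11 a22 a21 : ℝ) (h21 : a21 ≠ 0)
    (htr : (a11 + a22) ^ 3 - (a11 + a22) + 1 = 0) :
    (!![a11, (1 - a11 * a22 - a11 ^ 2 - a22 ^ 2) / a21; a21, a22]) ^ 3 -
      !![a11, (1 - a11 * a22 - a11 ^ 2 - a22 ^ 2) / a21; a21, a22] - 1 = 0 := by
  ext i j
  fin_cases i <;> fin_cases j <;>
    simp [pow_succ, Matrix.mul_apply, Fin.sum_univ_succ, Matrix.one_apply] <;>
    field_simp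
  · linear_combination (-1 : ℝ) * htr
  · linear_combination (0 : ℝ) * htr
  · linear_combination (0 : ℝ) * htr
  · linear_combination (-1 : ℝ) * htr
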